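/- arXiv:2005.08137 — 7 statements merged into one kernel-verified Lean document; each statement's English description precedes it below -/
import Mathlib

section
/- Let E be a finite set, let 𝒮 be a nonempty finite family of subsets of E, and for each e ∈ E let 0 ≤ ℓ_e ≤ u_e. For a vector d in the box B = ∏_{e∈E} [ℓ_e, u_e], let OPT(d) = min_{S∈𝒮} Σ_{e∈S} d_e; for S ∈ 𝒮 let regret(S) = sup_{d∈B} (Σ_{e∈S} d_e − OPT(d)), and let MR = min_{S∈𝒮} regret(S). Suppose γ ≥ 1, δ ≥ 1, α ≥ 0, β ≥ 0, and x* ∈ [0,1]^E satisfy: (i) for all d ∈ B, Σ_{e∈E} d_e x*_e ≤ α·OPT(d) + β·MR; (ii) for all d ∈ B, OPT(d) ≤ δ·Σ_{e∈E} d_e x*_e; and (iii) S ∈ 𝒮 satisfies Σ_{e∈S} w_e ≤ γ·min_{S'∈𝒮} Σ_{e∈S'} w_e, where w_e = max{u_e(1 − δx*_e), ℓ_e(1 − δx*_e)} + δℓ_e x*_e. Then for every d ∈ B, Σ_{e∈S} d_e ≤ γδα·OPT(d) + (γδβ + γ)·MR. -/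
/-- General rounding theorem for robust covering problems (nonalgorithmic core). -/
theorem stmt_0 {E : Type*} [Fintype E] [DecidableEq E]
    (ℓ u : E → ℝ) (hℓ : ∀ e, 0 ≤ ℓ e) (hℓu : ∀ e, ℓ e ≤ u e)
    (𝒮 : Finset (Finset E)) (h𝒮 : 𝒮.Nonempty)
    (B : Set (E → ℝ)) (hB : B = {d | ∀ e, ℓ e ≤ d e ∧ d e ≤ u e})
    (OPT : (E → ℝ) → ℝ)
    (hOPT : ∀ d, OPT d = 𝒮.inf' h𝒮 (fun S => ∑ e ∈ S, d e))
    (regret : Finset E → ℝ)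
    (hregret : ∀ S, regret S = sSup ((fun d => (∑ e ∈ S, d e) - OPT d) '' B))
    (MR : ℝ) (hMR : MR = 𝒮.inf' h𝒮 regret)
    (γ δ α β : ℝ) (hγ : 1 ≤ γ) (hδ : 1 ≤ δ) (hα : 0 ≤ α) (hβ : 0 ≤ β)
    (x : E → ℝ) (hx : ∀ e, 0 ≤ x e ∧ x e ≤ 1)
    (h1 : ∀ d ∈ B, ∑ e, d e * x e ≤ α * OPT d + β * MR)
    (h2 : ∀ d ∈ B, OPT d ≤ δ * ∑ e, d e * x e)
    (w : E → ℝ)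
    (hw : ∀ e, w e = max (u e * (1 - δ * x e)) (ℓ e * (1 - δ * x e)) + δ * ℓ e * x e)
    (S : Finset E) (hS : S ∈ 𝒮)
    (h3 : ∑ e ∈ S, w e ≤ γ * 𝒮.inf' h𝒮 (fun S' => ∑ e ∈ S', w e)) :
    ∀ d ∈ B, ∑ e ∈ S, d e ≤ γ * δ * α * OPT d + (γ * δ * β + γ) * MR := by
  classical
  intro d hd
  subst hB
  have hdm : ∀ e, ℓ e ≤ d e ∧ d e ≤ u e := hd
  have hδ0 : (0:ℝ) ≤ δ := zero_le_one.trans hδ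
  have hγ0 : (0:ℝ) ≤ γ := zero_le_one.trans hγ
  have hℓB : ℓ ∈ {d : E → ℝ | ∀ e, ℓ e ≤ d e ∧ d e ≤ u e} := fun e => ⟨le_rfl, hℓu e⟩
  -- OPT is nonnegative on the box
  have hOPTnn : ∀ d0 : E → ℝ, (∀ e, ℓ e ≤ d0 e ∧ d0 e ≤ u e) → 0 ≤ OPT d0 := by
    intro d0 hd0
    rw [hOPT]
    apply Finset.le_inf'
    intro T _
    exact Finset.sum_nonneg fun e _ => (hℓ e).trans (hd0 e).1
  -- OPT is monotone: OPT ℓ ≤ OPT d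
  have hOPTmono : OPT ℓ ≤ OPT d := by
    rw [hOPT, hOPT]
    obtain ⟨T, hT, hTeq⟩ := Finset.exists_mem_eq_inf' h𝒮 (fun S => ∑ e ∈ S, d e)
    rw [hTeq]
    exact le_trans (Finset.inf'_le _ hT) (Finset.sum_le_sum fun e _ => (hdm e).1)
  -- regret lower bound
  have hreg : ∀ S' : Finset E, ∀ d0 : E → ℝ, (∀ e, ℓ e ≤ d0 e ∧ d0 e ≤ u e) →
      (∑ e ∈ S', d0 e) - OPT d0 ≤ regret S' := by
    intro S' d0 hd0
    rw [hregret]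
    apply le_csSup
    · refine ⟨∑ e ∈ S', u e, ?_⟩
      rintro y ⟨d1, hd1, rfl⟩
      have h0 : 0 ≤ OPT d1 := hOPTnn d1 hd1
      have hsum : ∑ e ∈ S', d1 e ≤ ∑ e ∈ S', u e :=
        Finset.sum_le_sum fun e _ => (hd1 e).2
      simp only
      linarith
    · exact ⟨d0, hd0, rfl⟩
  -- the regret minimizer
  obtain ⟨S0, hS0, hMReq⟩ := Finset.exists_mem_eq_inf' h𝒮 regret
  have hMR0 : MR = regret S0 := by rw [hMR, hMReq]
  -- worst-case realization for S0
  set d' : E → ℝ := fun e => if e ∈ S0 ∧ 0 ≤ 1 - δ * x e then u e else ℓ e with hd'def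
  have hd'B : ∀ e, ℓ e ≤ d' e ∧ d' e ≤ u e := by
    intro e
    simp only [hd'def]
    split
    · exact ⟨hℓu e, le_rfl⟩
    · exact ⟨le_rfl, hℓu e⟩
  have hwS0 : ∀ e ∈ S0, w e = d' e - δ * x e * (d' e - ℓ e) := by
    intro e he
    rw [hw]
    simp only [hd'def]
    by_cases hc : 0 ≤ 1 - δ * x e
    · rw [if_pos ⟨he, hc⟩, max_eq_left (mul_le_mul_of_nonneg_right (hℓu e) hc)]
      ring
    · rw [if_neg (fun h => hc h.2),
        max_eq_right (mul_le_mul_of_nonpos_right (hℓu e) (le_of_not_ge hc))]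
      ring
  -- key bound: ∑_{S0} w ≤ MR + δ * ∑ ℓ x
  have key0 : ∑ e ∈ S0, w e ≤ MR + δ * ∑ e, ℓ e * x e := by
    have e1 : ∑ e ∈ S0, w e =
        (∑ e ∈ S0, d' e) - δ * (∑ e ∈ S0, d' e * x e) + δ * (∑ e ∈ S0, ℓ e * x e) := by
      rw [Finset.mul_sum, Finset.mul_sum, ← Finset.sum_sub_distrib, ← Finset.sum_add_distrib]
      exact Finset.sum_congr rfl fun e he => by rw [hwS0 e he]; ring
    have e2 : (∑ e ∈ S0, d' e) - OPT d' ≤ MR := by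
      rw [hMR0]; exact hreg S0 d' hd'B
    have e3 : OPT d' ≤ δ * ∑ e, d' e * x e := h2 d' hd'B
    have e4 : ∑ e, d' e * x e = (∑ e ∈ S0, d' e * x e) + ∑ e ∈ S0ᶜ, ℓ e * x e := by
      rw [← Finset.sum_add_sum_compl S0 (fun e => d' e * x e)]
      congr 1
      refine Finset.sum_congr rfl fun e he => ?_
      have hne : e ∉ S0 := Finset.mem_compl.mp he
      simp only [hd'def]
      rw [if_neg (fun h => hne h.1)]
    have e5 : ∑ e, ℓ e * x e = (∑ e ∈ S0, ℓ e * x e) + ∑ e ∈ S0ᶜ, ℓ e * x e :=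
      (Finset.sum_add_sum_compl S0 (fun e => ℓ e * x e)).symm
    nlinarith [e1, e2, e3, e4, e5]
  -- per-element bound for d
  have per : ∀ e, d e ≤ w e + δ * x e * (d e - ℓ e) := by
    intro e
    rw [hw]
    rcases le_or_gt 0 (1 - δ * x e) with hc | hc
    · have h2' := mul_le_mul_of_nonneg_right (hdm e).2 hc
      have h3' := le_max_left (u e * (1 - δ * x e)) (ℓ e * (1 - δ * x e))
      nlinarith
    · have h2' := mul_le_mul_of_nonpos_right (hdm e).1 hc.le
      have h3' := le_max_right (u e * (1 - δ * x e)) (ℓ e * (1 - δ * x e))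
      nlinarith
  have stepA : ∑ e ∈ S, d e ≤
      ∑ e ∈ S, w e + δ * ((∑ e, d e * x e) - ∑ e, ℓ e * x e) := by
    have c1 : ∑ e ∈ S, d e ≤ ∑ e ∈ S, (w e + δ * x e * (d e - ℓ e)) :=
      Finset.sum_le_sum fun e _ => per e
    have c2 : ∑ e ∈ S, (w e + δ * x e * (d e - ℓ e)) =
        ∑ e ∈ S, w e + ∑ e ∈ S, δ * x e * (d e - ℓ e) := Finset.sum_add_distrib
    have c3 : ∑ e ∈ S, δ * x e * (d e - ℓ e) ≤ ∑ e, δ * x e * (d e - ℓ e) := by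
      apply Finset.sum_le_sum_of_subset_of_nonneg (Finset.subset_univ S)
      intro e _ _
      exact mul_nonneg (mul_nonneg hδ0 (hx e).1) (sub_nonneg.mpr (hdm e).1)
    have c4 : ∑ e, δ * x e * (d e - ℓ e) =
        δ * ((∑ e, d e * x e) - ∑ e, ℓ e * x e) := by
      rw [← Finset.sum_sub_distrib, Finset.mul_sum]
      exact Finset.sum_congr rfl fun e _ => by ring
    linarith
  have stepC : ∑ e ∈ S, w e ≤ γ * (MR + δ * ∑ e, ℓ e * x e) := by
    refine h3.trans ?_
    exact mul_le_mul_of_nonneg_left ((Finset.inf'_le _ hS0).trans key0) hγ0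
  have hXd : ∑ e, d e * x e ≤ α * OPT d + β * MR := h1 d hd
  have hL : ∑ e, ℓ e * x e ≤ α * OPT ℓ + β * MR := h1 ℓ hℓB
  have m1 : δ * ∑ e, d e * x e ≤ δ * (α * OPT d + β * MR) :=
    mul_le_mul_of_nonneg_left hXd hδ0
  have m2 : ((γ - 1) * δ) * ∑ e, ℓ e * x e ≤ ((γ - 1) * δ) * (α * OPT ℓ + β * MR) :=
    mul_le_mul_of_nonneg_left hL (mul_nonneg (by linarith) hδ0)
  have m3 : ((γ - 1) * δ * α) * OPT ℓ ≤ ((γ - 1) * δ * α) * OPT d :=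
    mul_le_mul_of_nonneg_left hOPTmono (mul_nonneg (mul_nonneg (by linarith) hδ0) hα)
  nlinarith [stepA, stepC, m1, m2, m3]
end

section
/- Let E be a finite set, for each e ∈ E let 0 ≤ ℓ_e ≤ u_e, let δ ≥ 0, let x : E → ℝ satisfy 0 ≤ x_e ≤ 1 for all e, and let S ⊆ E. Then sup over d in the box B = ∏_{e∈E} [ℓ_e, u_e] of (Σ_{e∈S} d_e − δ·Σ_{e∈E} d_e x_e) equals Σ_{e∈S} [max{u_e(1 − δx_e), ℓ_e(1 − δx_e)} + δℓ_e x_e] − Σ_{e∈E} δℓ_e x_e. -/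
/-- Closed form for the maximum regret of an integral solution `S` against the scaled
fractional solution `δ • x` over the box of realizations. -/
theorem stmt_2 {E : Type*} [Fintype E] [DecidableEq E]
    (ℓ u : E → ℝ) (hℓ : ∀ e, 0 ≤ ℓ e) (hℓu : ∀ e, ℓ e ≤ u e)
    (δ : ℝ) (hδ : 0 ≤ δ)
    (x : E → ℝ) (hx : ∀ e, 0 ≤ x e ∧ x e ≤ 1)
    (S : Finset E) :
    sSup ((fun d : E → ℝ => (∑ e ∈ S, d e) - δ * ∑ e, d e * x e) ''
        {d | ∀ e, ℓ e ≤ d e ∧ d e ≤ u e})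
      = (∑ e ∈ S, (max (u e * (1 - δ * x e)) (ℓ e * (1 - δ * x e)) + δ * ℓ e * x e))
        - ∑ e, δ * ℓ e * x e := by
  classical
  set D : E → ℝ := fun e => if e ∈ S then (if 0 ≤ 1 - δ * x e then u e else ℓ e) else ℓ e
    with hD
  have hDbox : ∀ e, ℓ e ≤ D e ∧ D e ≤ u e := by
    intro e
    simp only [hD]
    split_ifs <;> constructor <;> first | exact le_rfl | exact hℓu e
  -- rewrite objective as a single sum over univ
  have hobj : ∀ d : E → ℝ,
      (∑ e ∈ S, d e) - δ * ∑ e, d e * x e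
        = ∑ e, ((if e ∈ S then d e else 0) - δ * (d e * x e)) := by
    intro d
    rw [Finset.sum_sub_distrib, Finset.sum_ite_mem, Finset.univ_inter, Finset.mul_sum]
  -- rewrite RHS as a single sum over univ
  have hRHS :
      (∑ e ∈ S, (max (u e * (1 - δ * x e)) (ℓ e * (1 - δ * x e)) + δ * ℓ e * x e))
        - ∑ e, δ * ℓ e * x e
      = ∑ e, ((if e ∈ S then
          max (u e * (1 - δ * x e)) (ℓ e * (1 - δ * x e)) + δ * ℓ e * x e else 0)
          - δ * ℓ e * x e) := by
    rw [Finset.sum_sub_distrib, Finset.sum_ite_mem, Finset.univ_inter]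
  -- per-element value of D
  have hval : ∀ e : E,
      (if e ∈ S then D e else 0) - δ * (D e * x e)
        = (if e ∈ S then
            max (u e * (1 - δ * x e)) (ℓ e * (1 - δ * x e)) + δ * ℓ e * x e else 0)
          - δ * ℓ e * x e := by
    intro e
    by_cases he : e ∈ S
    · simp only [if_pos he]
      have h1 : D e - δ * (D e * x e) = D e * (1 - δ * x e) := by ring
      have h2 : D e * (1 - δ * x e)
          = max (u e * (1 - δ * x e)) (ℓ e * (1 - δ * x e)) := by
        simp only [hD, if_pos he]
        split_ifs with h
        · exact (max_eq_left (mul_le_mul_of_nonneg_right (hℓu e) h)).symm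
        · exact (max_eq_right (mul_le_mul_of_nonpos_right (hℓu e) (le_of_not_ge h))).symm
      rw [h1, h2]; ring
    · simp only [if_neg he, hD]
      ring
  -- upper bound per element
  have hub : ∀ d : E → ℝ, (∀ e, ℓ e ≤ d e ∧ d e ≤ u e) → ∀ e : E,
      (if e ∈ S then d e else 0) - δ * (d e * x e)
        ≤ (if e ∈ S then D e else 0) - δ * (D e * x e) := by
    intro d hd e
    rw [hval e]
    by_cases he : e ∈ S
    · simp only [if_pos he]
      have h1 : d e - δ * (d e * x e) = d e * (1 - δ * x e) := by ring
      rw [h1]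
      have : d e * (1 - δ * x e)
          ≤ max (u e * (1 - δ * x e)) (ℓ e * (1 - δ * x e)) := by
        rcases le_or_gt 0 (1 - δ * x e) with h | h
        · exact le_trans (mul_le_mul_of_nonneg_right (hd e).2 h) (le_max_left _ _)
        · exact le_trans (mul_le_mul_of_nonpos_right (hd e).1 h.le) (le_max_right _ _)
      linarith
    · simp only [if_neg he]
      have : δ * (ℓ e * x e) ≤ δ * (d e * x e) :=
        mul_le_mul_of_nonneg_left
          (mul_le_mul_of_nonneg_right (hd e).1 (hx e).1) hδ
      have hδl : δ * ℓ e * x e = δ * (ℓ e * x e) := by ring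
      linarith
  apply IsGreatest.csSup_eq
  constructor
  · refine ⟨D, hDbox, ?_⟩
    show (∑ e ∈ S, D e) - δ * ∑ e, D e * x e = _
    rw [hobj D, hRHS]
    exact Finset.sum_congr rfl fun e _ => hval e
  · rintro v ⟨d, hd, rfl⟩
    rw [hRHS]
    simp only [hobj d]
    calc ∑ e, ((if e ∈ S then d e else 0) - δ * (d e * x e))
        ≤ ∑ e, ((if e ∈ S then D e else 0) - δ * (D e * x e)) :=
          Finset.sum_le_sum fun e _ => hub d hd e
      _ = _ := Finset.sum_congr rfl fun e _ => hval e
end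

section
/- Let E be a finite set, for each e ∈ E let 0 ≤ ℓ_e ≤ u_e, let x : E → ℝ satisfy 0 ≤ x_e ≤ 2 for all e, let r ∈ ℝ, and let 𝒯 be a nonempty finite family of subsets of E. Suppose there exist T ∈ 𝒯 and d in the box B = ∏_{e∈E}[ℓ_e, u_e] such that Σ_{e∈E} d_e x_e > 2·Σ_{e∈T} d_e + r. Then any T' ∈ 𝒯 minimizing Σ_{e∈T'} (u_e x_e − ℓ_e x_e + 2ℓ_e) over all members of 𝒯 satisfies Σ_{e∈T'} (ℓ_e x_e − 2ℓ_e) + Σ_{e∉T'} u_e x_e > r. -/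
/-- Core computation of the approximate separation oracle for robust TSP: the member of
`𝒯` minimizing the derived weights `u_e x_e - ℓ_e x_e + 2 ℓ_e` witnesses regret
exceeding `r`. -/
theorem stmt_3 {E : Type*} [Fintype E] [DecidableEq E]
    (ℓ u : E → ℝ) (hℓ : ∀ e, 0 ≤ ℓ e) (hℓu : ∀ e, ℓ e ≤ u e)
    (x : E → ℝ) (hx : ∀ e, 0 ≤ x e ∧ x e ≤ 2) (r : ℝ)
    (𝒯 : Finset (Finset E)) (h𝒯 : 𝒯.Nonempty)
    (hex : ∃ T ∈ 𝒯, ∃ d : E → ℝ, (∀ e, ℓ e ≤ d e ∧ d e ≤ u e) ∧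
      (∑ e, d e * x e) > 2 * (∑ e ∈ T, d e) + r)
    (T' : Finset E) (hT' : T' ∈ 𝒯)
    (hmin : ∀ T ∈ 𝒯, ∑ e ∈ T', (u e * x e - ℓ e * x e + 2 * ℓ e)
        ≤ ∑ e ∈ T, (u e * x e - ℓ e * x e + 2 * ℓ e)) :
    (∑ e ∈ T', (ℓ e * x e - 2 * ℓ e)) + ∑ e ∈ T'ᶜ, u e * x e > r := by
  obtain ⟨T, hT, d, hd, hgt⟩ := hex
  have key : ∀ S : Finset E, (∑ e ∈ S, (ℓ e * x e - 2 * ℓ e)) + ∑ e ∈ Sᶜ, u e * x e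
      = (∑ e, u e * x e) - ∑ e ∈ S, (u e * x e - ℓ e * x e + 2 * ℓ e) := by
    intro S
    have h := Finset.sum_add_sum_compl S (fun e => u e * x e)
    rw [Finset.sum_sub_distrib, Finset.sum_add_distrib, Finset.sum_sub_distrib]
    linarith
  have hA : ∑ e ∈ T, (d e * x e - 2 * d e) ≤ ∑ e ∈ T, (ℓ e * x e - 2 * ℓ e) := by
    apply Finset.sum_le_sum
    intro e _
    nlinarith [(hd e).1, (hx e).2]
  have hB : ∑ e ∈ Tᶜ, d e * x e ≤ ∑ e ∈ Tᶜ, u e * x e := by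
    apply Finset.sum_le_sum
    intro e _
    exact mul_le_mul_of_nonneg_right (hd e).2 (hx e).1
  have hC : ∑ e ∈ T, d e * x e + ∑ e ∈ Tᶜ, d e * x e = ∑ e, d e * x e :=
    Finset.sum_add_sum_compl T _
  have hA' : ∑ e ∈ T, (d e * x e - 2 * d e)
      = ∑ e ∈ T, d e * x e - 2 * ∑ e ∈ T, d e := by
    rw [Finset.sum_sub_distrib, Finset.mul_sum]
  have h1 : (∑ e ∈ T, (ℓ e * x e - 2 * ℓ e)) + ∑ e ∈ Tᶜ, u e * x e > r := by
    linarith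
  have h2 := hmin T hT
  rw [key] at h1 ⊢
  linarith
end

section
/- Let 𝒜 and ℱ be finite sets, let w_A : 𝒜 → ℝ≥0 and w_F : ℱ → ℝ≥0 be nonnegative weights, and let α : 𝒜 × ℱ → ℝ≥0 satisfy Σ_{f∈ℱ} α(a,f) = 1 for every a ∈ 𝒜 and Σ_{a∈𝒜} α(a,f) ≤ 2 for every f ∈ ℱ. Let λ ≥ 1 and θ ≥ 1, and suppose Σ_{a∈𝒜} w_A(a) > 2λθ·Σ_{f∈ℱ} w_F(f). Then Σ_{(a,f) : w_A(a) > λ·w_F(f)} α(a,f)·w_A(a) > ((θ−1)/θ)·Σ_{(a,f)∈𝒜×ℱ} α(a,f)·w_A(a). -/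
/-- Contrapositive of the abstract averaging lemma (Corollary to `approxlocal`). -/
theorem stmt_8 {A F : Type*} [Fintype A] [Fintype F]
    (wA : A → ℝ) (wF : F → ℝ) (hwA : ∀ a, 0 ≤ wA a) (hwF : ∀ f, 0 ≤ wF f)
    (α : A → F → ℝ) (hα : ∀ a f, 0 ≤ α a f)
    (hrow : ∀ a, ∑ f, α a f = 1) (hcol : ∀ f, ∑ a, α a f ≤ 2)
    (lam θ : ℝ) (hlam : 1 ≤ lam) (hθ : 1 ≤ θ)
    (hmaj : ∑ a, wA a > 2 * lam * θ * ∑ f, wF f) :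
    ∑ a, ∑ f, (if wA a > lam * wF f then α a f * wA a else 0)
      > ((θ - 1) / θ) * ∑ a, ∑ f, α a f * wA a := by
  have hθ0 : (0 : ℝ) < θ := by linarith
  have hsum : ∑ a, ∑ f, α a f * wA a = ∑ a, wA a := by
    refine Finset.sum_congr rfl fun a _ => ?_
    rw [← Finset.sum_mul, hrow a, one_mul]
  set S := ∑ a, wA a with hS
  set bad := ∑ a, ∑ f, (if wA a > lam * wF f then 0 else α a f * wA a) with hbad
  have hsplit : ∑ a, ∑ f, (if wA a > lam * wF f then α a f * wA a else 0)
      = S - bad := by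
    rw [hbad, ← hsum, ← Finset.sum_sub_distrib]
    refine Finset.sum_congr rfl fun a _ => ?_
    rw [← Finset.sum_sub_distrib]
    refine Finset.sum_congr rfl fun f _ => ?_
    by_cases h : wA a > lam * wF f <;> simp [h]
  have hbadle : bad ≤ ∑ a, ∑ f, α a f * (lam * wF f) := by
    refine Finset.sum_le_sum fun a _ => Finset.sum_le_sum fun f _ => ?_
    have h0 : 0 ≤ α a f * (lam * wF f) :=
      mul_nonneg (hα a f) (mul_nonneg (by linarith) (hwF f))
    by_cases h : wA a > lam * wF f
    · simp [h, h0]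
    · simp only [h, if_false]
      exact mul_le_mul_of_nonneg_left (not_lt.mp h) (hα a f)
  have hswap : ∑ a, ∑ f, α a f * (lam * wF f)
      = ∑ f, (lam * wF f) * ∑ a, α a f := by
    rw [Finset.sum_comm]
    refine Finset.sum_congr rfl fun f _ => ?_
    rw [Finset.mul_sum]
    exact Finset.sum_congr rfl fun a _ => mul_comm _ _
  have hcolbound : ∑ f, (lam * wF f) * ∑ a, α a f ≤ 2 * lam * ∑ f, wF f := by
    calc ∑ f, (lam * wF f) * ∑ a, α a f
        ≤ ∑ f, (lam * wF f) * 2 := by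
          refine Finset.sum_le_sum fun f _ => ?_
          exact mul_le_mul_of_nonneg_left (hcol f)
            (mul_nonneg (by linarith) (hwF f))
      _ = 2 * lam * ∑ f, wF f := by
          rw [Finset.mul_sum]
          exact Finset.sum_congr rfl fun f _ => by ring
  have hbad2 : bad ≤ 2 * lam * ∑ f, wF f := by
    calc bad ≤ ∑ a, ∑ f, α a f * (lam * wF f) := hbadle
      _ = ∑ f, (lam * wF f) * ∑ a, α a f := hswap
      _ ≤ 2 * lam * ∑ f, wF f := hcolbound
  have hSθ : 2 * lam * ∑ f, wF f < S / θ := by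
    rw [lt_div_iff₀ hθ0]
    calc 2 * lam * (∑ f, wF f) * θ = 2 * lam * θ * ∑ f, wF f := by ring
      _ < S := hmaj
  rw [hsplit, hsum]
  have : ((θ - 1) / θ) * S = S - S / θ := by field_simp
  rw [this]
  linarith
end

section
/- Let 𝒜 and ℱ be finite sets with n = |𝒜| ≥ 1, let w_A, w'_A : 𝒜 → ℝ≥0 and w_F, w'_F : ℱ → ℝ≥0 be nonnegative weights, and let α : 𝒜 × ℱ → ℝ≥0 satisfy Σ_{f∈ℱ} α(a,f) = 1 for every a ∈ 𝒜 and Σ_{a∈𝒜} α(a,f) ≤ 2 for every f ∈ ℱ. Let Γ > 1 and 0 < ε < √Γ − 1, suppose Σ_{a∈𝒜} w_A(a) > 2Γ·Σ_{f∈ℱ} w_F(f), and suppose K := (√Γ−1)(√Γ−1−ε)/Γ − 1/n > 0. Then there exist a ∈ 𝒜 and f ∈ ℱ with α(a,f) > 0 such that: w_A(a) > √Γ·w_F(f); w_A(a) − (1+ε)·w_F(f) ≥ (1/n²)·Σ_{a'∈𝒜} w_A(a'); and ((1+ε)·w'_F(f) − w'_A(a)) · K · Σ_{a'∈𝒜}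 w_A(a') ≤ 2(1+ε)·(Σ_{f'∈ℱ} w'_F(f')) · (w_A(a) − (1+ε)·w_F(f)). -/
set_option maxHeartbeats 2000000 in
/-- Abstract averaging core of Lemma `greedyswap`: existence of a swap that decreases
the first cost substantially while increasing the second cost at a bounded rate of
exchange. -/
theorem stmt_9 {A F : Type*} [Fintype A] [Fintype F]
    (wA wA' : A → ℝ) (wF wF' : F → ℝ)
    (hwA : ∀ a, 0 ≤ wA a) (hwA' : ∀ a, 0 ≤ wA' a)
    (hwF : ∀ f, 0 ≤ wF f) (hwF' : ∀ f, 0 ≤ wF' f)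
    (α : A → F → ℝ) (hα : ∀ a f, 0 ≤ α a f)
    (hrow : ∀ a, ∑ f, α a f = 1) (hcol : ∀ f, ∑ a, α a f ≤ 2)
    (Γ ε : ℝ) (hΓ : 1 < Γ) (hε : 0 < ε) (hε' : ε < Real.sqrt Γ - 1)
    (n : ℕ) (hn : n = Fintype.card A) (hn1 : 1 ≤ n)
    (hmaj : ∑ a, wA a > 2 * Γ * ∑ f, wF f)
    (K : ℝ)
    (hK : K = (Real.sqrt Γ - 1) * (Real.sqrt Γ - 1 - ε) / Γ - 1 / (n : ℝ))
    (hKpos : 0 < K) :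
    ∃ a f, 0 < α a f ∧ wA a > Real.sqrt Γ * wF f ∧
      wA a - (1 + ε) * wF f ≥ (1 / (n : ℝ) ^ 2) * ∑ a', wA a' ∧
      ((1 + ε) * wF' f - wA' a) * K * (∑ a', wA a')
        ≤ 2 * (1 + ε) * (∑ f', wF' f') * (wA a - (1 + ε) * wF f) := by
  classical
  by_contra hcon
  push_neg at hcon
  set s := Real.sqrt Γ with hs
  have hΓ0 : (0:ℝ) < Γ := lt_trans one_pos hΓ
  have hs2 : s ^ 2 = Γ := Real.sq_sqrt hΓ0.le
  have hs0 : 0 ≤ s := Real.sqrt_nonneg _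
  have hs1 : 1 < s := by nlinarith
  set W := ∑ a, wA a with hW
  have hFnn : 0 ≤ ∑ f, wF f := Finset.sum_nonneg fun f _ => hwF f
  have hF'nn : 0 ≤ ∑ f, wF' f := Finset.sum_nonneg fun f _ => hwF' f
  have hWpos : 0 < W := lt_of_le_of_lt (mul_nonneg (by positivity) hFnn) hmaj
  have hnpos : (0:ℝ) < (n:ℝ) := by exact_mod_cast hn1
  have hsε : 0 < s - 1 - ε := by linarith
  set g : A → F → ℝ := fun a f => wA a - (1 + ε) * wF f with hg
  set P : A × F → Prop := fun p => s * wF p.2 < wA p.1 ∧ (1 / (n:ℝ) ^ 2) * W ≤ g p.1 p.2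
    with hP
  set S : Finset (A × F) := Finset.univ.filter P with hSdef
  -- total α sum
  have hαtot : ∑ p : A × F, α p.1 p.2 = (n : ℝ) := by
    rw [Fintype.sum_prod_type]
    simp [hrow, hn]
  -- total weighted gain
  have key1 : W - 2 * (1 + ε) * ∑ f, wF f ≤ ∑ p : A × F, α p.1 p.2 * g p.1 p.2 := by
    have h1 : ∑ a, ∑ f, α a f * wA a = W := by
      simp_rw [← Finset.sum_mul, hrow, one_mul]; rfl
    have h2 : ∑ a, ∑ f, α a f * ((1 + ε) * wF f) ≤ 2 * (1 + ε) * ∑ f, wF f := by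
      rw [Finset.sum_comm]
      have : ∀ f, ∑ a, α a f * ((1 + ε) * wF f) ≤ 2 * ((1 + ε) * wF f) := by
        intro f
        rw [← Finset.sum_mul]
        exact mul_le_mul_of_nonneg_right (hcol f)
          (mul_nonneg (by linarith : (0:ℝ) ≤ 1 + ε) (hwF f))
      calc ∑ f, ∑ a, α a f * ((1 + ε) * wF f) ≤ ∑ f, 2 * ((1 + ε) * wF f) :=
            Finset.sum_le_sum fun f _ => this f
        _ = 2 * (1 + ε) * ∑ f, wF f := by simp_rw [← mul_assoc, ← Finset.mul_sum]
    rw [Fintype.sum_prod_type]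
    have : ∑ a, ∑ f, α a f * g a f
        = (∑ a, ∑ f, α a f * wA a) - ∑ a, ∑ f, α a f * ((1 + ε) * wF f) := by
      rw [← Finset.sum_sub_distrib]
      congr 1; ext a
      rw [← Finset.sum_sub_distrib]
      congr 1; ext f
      simp [hg]; ring
    rw [this, h1]
    linarith
  -- pointwise bound off S
  have hbound : ∀ p : A × F, ¬ P p → g p.1 p.2 ≤ (s - 1 - ε) * wF p.2 + W / (n:ℝ) ^ 2 := by
    intro p hp
    have hp' : ¬ (s * wF p.2 < wA p.1 ∧ (1 / (n:ℝ) ^ 2) * W ≤ g p.1 p.2) := hp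
    push_neg at hp'
    by_cases h : s * wF p.2 < wA p.1
    · have h2 := hp' h
      have : W / (n:ℝ) ^ 2 = (1 / (n:ℝ) ^ 2) * W := by ring
      rw [this]
      nlinarith [mul_nonneg hsε.le (hwF p.2)]
    · push_neg at h
      have : g p.1 p.2 ≤ (s - 1 - ε) * wF p.2 := by
        simp only [hg]
        nlinarith
      have hWn : 0 ≤ W / (n:ℝ) ^ 2 := by positivity
      linarith
  -- bound for complement sum
  have key2 : ∑ p ∈ Finset.univ.filter (fun p => ¬ P p), α p.1 p.2 * g p.1 p.2
      ≤ (s - 1 - ε) * (2 * ∑ f, wF f) + W / (n:ℝ) := by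
    have hstep : ∑ p ∈ Finset.univ.filter (fun p => ¬ P p), α p.1 p.2 * g p.1 p.2
        ≤ ∑ p : A × F, α p.1 p.2 * ((s - 1 - ε) * wF p.2 + W / (n:ℝ) ^ 2) := by
      refine le_trans (Finset.sum_le_sum ?_) (Finset.sum_le_sum_of_subset_of_nonneg
        (Finset.filter_subset _ _) ?_)
      · intro p hp
        rw [Finset.mem_filter] at hp
        exact mul_le_mul_of_nonneg_left (hbound p hp.2) (hα p.1 p.2)
      · intro p _ _
        have : 0 ≤ (s - 1 - ε) * wF p.2 + W / (n:ℝ) ^ 2 := by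
          have := mul_nonneg hsε.le (hwF p.2)
          have : (0:ℝ) ≤ W / (n:ℝ) ^ 2 := by positivity
          nlinarith [mul_nonneg hsε.le (hwF p.2)]
        exact mul_nonneg (hα p.1 p.2) this
    have hsplit : ∑ p : A × F, α p.1 p.2 * ((s - 1 - ε) * wF p.2 + W / (n:ℝ) ^ 2)
        = (∑ p : A × F, α p.1 p.2 * ((s - 1 - ε) * wF p.2))
          + (W / (n:ℝ) ^ 2) * ∑ p : A × F, α p.1 p.2 := by
      rw [Finset.mul_sum, ← Finset.sum_add_distrib]
      congr 1; ext p; ring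
    have hterm1 : ∑ p : A × F, α p.1 p.2 * ((s - 1 - ε) * wF p.2)
        ≤ (s - 1 - ε) * (2 * ∑ f, wF f) := by
      rw [Fintype.sum_prod_type_right]
      have : ∀ f, ∑ a, α a f * ((s - 1 - ε) * wF f) ≤ 2 * ((s - 1 - ε) * wF f) := by
        intro f
        rw [← Finset.sum_mul]
        exact mul_le_mul_of_nonneg_right (hcol f) (mul_nonneg hsε.le (hwF f))
      calc ∑ f, ∑ a, α a f * ((s - 1 - ε) * wF f) ≤ ∑ f, 2 * ((s - 1 - ε) * wF f) :=
            Finset.sum_le_sum fun f _ => this f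
        _ = (s - 1 - ε) * (2 * ∑ f, wF f) := by simp_rw [← mul_assoc, ← Finset.mul_sum]; ring
    have hterm2 : (W / (n:ℝ) ^ 2) * ∑ p : A × F, α p.1 p.2 = W / (n:ℝ) := by
      rw [hαtot]; field_simp
    calc _ ≤ _ := hstep
      _ = _ := hsplit
      _ ≤ (s - 1 - ε) * (2 * ∑ f, wF f) + W / (n:ℝ) := by rw [hterm2]; linarith
  -- main lower bound on sum over S
  have keyS : K * W < ∑ p ∈ S, α p.1 p.2 * g p.1 p.2 := by
    have hsplit := Finset.sum_filter_add_sum_filter_not Finset.univ P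
      (fun p : A × F => α p.1 p.2 * g p.1 p.2)
    have h2F : s * (2 * ∑ f, wF f) < s * (W / Γ) := by
      have : 2 * ∑ f, wF f < W / Γ := by
        rw [lt_div_iff₀ hΓ0]
        have : 2 * (∑ f, wF f) * Γ = 2 * Γ * ∑ f, wF f := by ring
        linarith
      exact mul_lt_mul_of_pos_left this (by linarith)
    have hKle : K * W ≤ (1 - s / Γ - 1 / (n:ℝ)) * W := by
      have h1 : (s - 1) * (s - 1 - ε) ≤ Γ - s := by
        have e : s ^ 2 - s - (s - 1) * (s - 1 - ε) = (s - 1) * (1 + ε) := by ring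
        have pos : 0 ≤ (s - 1) * (1 + ε) :=
          mul_nonneg (by linarith) (by linarith)
        linarith
      have h2 : (s - 1) * (s - 1 - ε) / Γ ≤ (Γ - s) / Γ := (div_le_div_iff_of_pos_right hΓ0).mpr h1
      have h3 : (Γ - s) / Γ = 1 - s / Γ := by field_simp
      have h4 : K ≤ 1 - s / Γ - 1 / (n:ℝ) := by rw [hK]; linarith
      exact mul_le_mul_of_nonneg_right h4 hWpos.le
    have hsum : ∑ p ∈ S, α p.1 p.2 * g p.1 p.2
        = (∑ p : A × F, α p.1 p.2 * g p.1 p.2)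
          - ∑ p ∈ Finset.univ.filter (fun p => ¬ P p), α p.1 p.2 * g p.1 p.2 := by
      rw [hSdef, ← hsplit]; ring
    rw [hsum]
    have hcomb : 2 * (1 + ε) * (∑ f, wF f) + (s - 1 - ε) * (2 * ∑ f, wF f)
        = s * (2 * ∑ f, wF f) := by ring
    have heq1 : (1 - s / Γ - 1 / (n:ℝ)) * W = W - s * (W / Γ) - W / (n:ℝ) := by
      field_simp
    linarith
  have hKW : 0 < K * W := mul_pos hKpos hWpos
  -- existence of p₀ ∈ S with α > 0
  obtain ⟨p₀, hp₀S, hp₀⟩ : ∃ p ∈ S, 0 < α p.1 p.2 * g p.1 p.2 := by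
    by_contra hno
    push_neg at hno
    have : ∑ p ∈ S, α p.1 p.2 * g p.1 p.2 ≤ 0 :=
      Finset.sum_nonpos fun p hp => hno p hp
    linarith
  have hαp₀ : 0 < α p₀.1 p₀.2 := by
    rcases (hα p₀.1 p₀.2).lt_or_eq with h | h
    · exact h
    · exfalso; rw [← h, zero_mul] at hp₀; exact lt_irrefl 0 hp₀
  set R : ℝ := 2 * (1 + ε) * ∑ f', wF' f' with hR
  have hRnn : 0 ≤ R := by positivity
  -- strict comparison from hcon
  have hstrict : ∀ p ∈ S, 0 < α p.1 p.2 →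
      R * g p.1 p.2 < ((1 + ε) * wF' p.2 - wA' p.1) * K * W := by
    intro p hpS hαp
    rw [hSdef, Finset.mem_filter] at hpS
    obtain ⟨-, hP1, hP2⟩ := hpS
    exact hcon p.1 p.2 hαp hP1 hP2
  -- sum comparison
  have hlt : ∑ p ∈ S, α p.1 p.2 * (R * g p.1 p.2)
      < ∑ p ∈ S, α p.1 p.2 * (((1 + ε) * wF' p.2 - wA' p.1) * K * W) := by
    refine Finset.sum_lt_sum (fun p hp => ?_) ⟨p₀, hp₀S, ?_⟩
    · rcases (hα p.1 p.2).lt_or_eq with h | h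
      · exact (mul_le_mul_of_nonneg_left (hstrict p hp h).le (hα p.1 p.2))
      · rw [← h]; simp
    · exact mul_lt_mul_of_pos_left (hstrict p₀ hp₀S hαp₀) hαp₀
  have hLHS : ∑ p ∈ S, α p.1 p.2 * (R * g p.1 p.2) = R * ∑ p ∈ S, α p.1 p.2 * g p.1 p.2 := by
    rw [Finset.mul_sum]; congr 1; ext p; ring
  have hRHS : ∑ p ∈ S, α p.1 p.2 * (((1 + ε) * wF' p.2 - wA' p.1) * K * W)
      = (K * W) * ∑ p ∈ S, α p.1 p.2 * ((1 + ε) * wF' p.2 - wA' p.1) := by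
    rw [Finset.mul_sum]; congr 1; ext p; ring
  have hRHSbound : ∑ p ∈ S, α p.1 p.2 * ((1 + ε) * wF' p.2 - wA' p.1) ≤ R := by
    have h1 : ∑ p ∈ S, α p.1 p.2 * ((1 + ε) * wF' p.2 - wA' p.1)
        ≤ ∑ p ∈ S, α p.1 p.2 * ((1 + ε) * wF' p.2) := by
      refine Finset.sum_le_sum fun p _ => ?_
      have : (1 + ε) * wF' p.2 - wA' p.1 ≤ (1 + ε) * wF' p.2 := by
        have := hwA' p.1; linarith
      exact mul_le_mul_of_nonneg_left this (hα p.1 p.2)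
    have h2 : ∑ p ∈ S, α p.1 p.2 * ((1 + ε) * wF' p.2)
        ≤ ∑ p : A × F, α p.1 p.2 * ((1 + ε) * wF' p.2) := by
      refine Finset.sum_le_sum_of_subset_of_nonneg (Finset.filter_subset _ _) ?_
      intro p _ _
      exact mul_nonneg (hα p.1 p.2) (mul_nonneg (by linarith) (hwF' p.2))
    have h3 : ∑ p : A × F, α p.1 p.2 * ((1 + ε) * wF' p.2) ≤ R := by
      rw [Fintype.sum_prod_type_right, hR]
      have : ∀ f, ∑ a, α a f * ((1 + ε) * wF' f) ≤ 2 * ((1 + ε) * wF' f) := by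
        intro f
        rw [← Finset.sum_mul]
        exact mul_le_mul_of_nonneg_right (hcol f)
          (mul_nonneg (by linarith : (0:ℝ) ≤ 1 + ε) (hwF' f))
      calc ∑ f, ∑ a, α a f * ((1 + ε) * wF' f) ≤ ∑ f, 2 * ((1 + ε) * wF' f) :=
            Finset.sum_le_sum fun f _ => this f
        _ = 2 * (1 + ε) * ∑ f', wF' f' := by simp_rw [← mul_assoc, ← Finset.mul_sum]
    linarith
  rw [hLHS, hRHS] at hlt
  have h1 : R * (K * W) ≤ R * ∑ p ∈ S, α p.1 p.2 * g p.1 p.2 :=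
    mul_le_mul_of_nonneg_left keyS.le hRnn
  have h2 : (K * W) * ∑ p ∈ S, α p.1 p.2 * ((1 + ε) * wF' p.2 - wA' p.1) ≤ (K * W) * R :=
    mul_le_mul_of_nonneg_left hRHSbound hKW.le
  linarith
end

section
/- Let E be a finite set, for each e ∈ E let u_e ≥ 0, let x : E → ℝ satisfy 0 ≤ x_e ≤ 1 for all e, let ε > 0 and r ∈ ℝ. Let SOL, T' ⊆ E, and suppose: (i) there exists d with 0 ≤ d_e ≤ u_e for all e such that Σ_{e∈E} d_e x_e > Σ_{e∈SOL} d_e + (4+ε)·r; and (ii) Σ_{e∈T'∖SOL} u_e x_e ≤ (4+ε)·Σ_{e∈SOL∖T'} u_e x_e. Then Σ_{e∉T'} u_e x_e > r. -/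
/-- Core computation of the separation oracle for robust Steiner tree with zero lower
bounds: the difference-approximate solution `T'` witnesses fractional regret
exceeding `r`. -/
theorem stmt_13 {E : Type*} [Fintype E] [DecidableEq E]
    (u : E → ℝ) (hu : ∀ e, 0 ≤ u e)
    (x : E → ℝ) (hx : ∀ e, 0 ≤ x e ∧ x e ≤ 1)
    (ε : ℝ) (hε : 0 < ε) (r : ℝ)
    (SOL T' : Finset E)
    (h1 : ∃ d : E → ℝ, (∀ e, 0 ≤ d e ∧ d e ≤ u e) ∧
      (∑ e, d e * x e) > (∑ e ∈ SOL, d e) + (4 + ε) * r)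
    (h2 : ∑ e ∈ T' \ SOL, u e * x e ≤ (4 + ε) * ∑ e ∈ SOL \ T', u e * x e) :
    ∑ e ∈ T'ᶜ, u e * x e > r := by
  obtain ⟨d, hd, hgt⟩ := h1
  set f : E → ℝ := fun e => u e * x e with hf
  have hf0 : ∀ e, 0 ≤ f e := fun e => mul_nonneg (hu e) (hx e).1
  have hA0 : 0 ≤ ∑ e ∈ T'ᶜ \ SOL, f e := Finset.sum_nonneg fun e _ => hf0 e
  have hC0 : 0 ≤ ∑ e ∈ SOL \ T', f e := Finset.sum_nonneg fun e _ => hf0 e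
  have h3 : ∑ e ∈ SOLᶜ, d e * x e > (4 + ε) * r := by
    have hsplit : ∑ e ∈ SOL, d e * x e + ∑ e ∈ SOLᶜ, d e * x e = ∑ e, d e * x e :=
      Finset.sum_add_sum_compl SOL _
    have hle : ∑ e ∈ SOL, d e * x e ≤ ∑ e ∈ SOL, d e :=
      Finset.sum_le_sum fun e _ => by nlinarith [(hd e).1, (hx e).2]
    linarith
  have h4 : ∑ e ∈ SOLᶜ, f e > (4 + ε) * r := by
    refine lt_of_lt_of_le h3 (Finset.sum_le_sum fun e _ => ?_)
    exact mul_le_mul_of_nonneg_right (hd e).2 (hx e).1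
  have hsplit2 : ∑ e ∈ SOLᶜ, f e = ∑ e ∈ T'ᶜ \ SOL, f e + ∑ e ∈ T' \ SOL, f e := by
    rw [← Finset.sum_union (by simp [Finset.disjoint_left, Finset.mem_sdiff]; tauto)]
    congr 1
    ext e
    simp [Finset.mem_sdiff]
    tauto
  have hsplit3 : ∑ e ∈ T'ᶜ, f e = ∑ e ∈ T'ᶜ \ SOL, f e + ∑ e ∈ SOL \ T', f e := by
    rw [← Finset.sum_union (by simp [Finset.disjoint_left, Finset.mem_sdiff]; tauto)]
    congr 1
    ext e
    simp [Finset.mem_sdiff]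
    tauto
  rw [hsplit3]
  nlinarith [hε, hA0, hC0, h2, h4, hsplit2]
end

section
/- Let E be a finite set, for each e ∈ E let 0 ≤ ℓ_e ≤ u_e, let x : E → ℝ satisfy 0 ≤ x_e ≤ 1 for all e, let r ∈ ℝ, and let α, β be reals with β ≥ 1 and α ≥ β + 1. Define c_e = u_e x_e − ℓ_e x_e + ℓ_e and c'_e = ℓ_e − ℓ_e x_e for each e. Let SOL, T' ⊆ E and suppose: (i) there exists d with ℓ_e ≤ d_e ≤ u_e for all e such that Σ_{e∈E} d_e x_e > α·Σ_{e∈SOL} d_e + β·r; (ii) Σ_{e∈T'∖SOL} c_e ≤ β·Σ_{e∈SOL∖T'} c_e; and (iii) Σ_{e∈T'∖SOL} c'_e ≤ ((α−1−β)/β)·Σ_{e∈SOL} c'_e. Then Σ_{e∉T'} u_e x_e + Σ_{e∈T'} ℓ_e x_e − Σ_{e∈T'} ℓ_e > r. -/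
/-- Core computation of the approximate separation oracle for robust Steiner tree with
general lower bounds: if `SOL` witnesses that the fractional solution `x` violates the
`(α, β)`-robustness condition with slack `r`, then the doubly-approximate solution `T'`
witnesses fractional regret exceeding `r`. -/
theorem stmt_14 {E : Type*} [Fintype E] [DecidableEq E]
    (ℓ u : E → ℝ) (hℓ : ∀ e, 0 ≤ ℓ e) (hℓu : ∀ e, ℓ e ≤ u e)
    (x : E → ℝ) (hx : ∀ e, 0 ≤ x e ∧ x e ≤ 1)
    (r α β : ℝ) (hβ : 1 ≤ β) (hα : β + 1 ≤ α)
    (c c' : E → ℝ)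
    (hc : ∀ e, c e = u e * x e - ℓ e * x e + ℓ e)
    (hc' : ∀ e, c' e = ℓ e - ℓ e * x e)
    (SOL T' : Finset E)
    (h1 : ∃ d : E → ℝ, (∀ e, ℓ e ≤ d e ∧ d e ≤ u e) ∧
      (∑ e, d e * x e) > α * (∑ e ∈ SOL, d e) + β * r)
    (h2 : ∑ e ∈ T' \ SOL, c e ≤ β * ∑ e ∈ SOL \ T', c e)
    (h3 : ∑ e ∈ T' \ SOL, c' e ≤ ((α - 1 - β) / β) * ∑ e ∈ SOL, c' e) :
    (∑ e ∈ T'ᶜ, u e * x e) + (∑ e ∈ T', ℓ e * x e) - (∑ e ∈ T', ℓ e) > r := by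
  obtain ⟨d, hd, hd1⟩ := h1
  have hβ0 : (0:ℝ) < β := lt_of_lt_of_le one_pos hβ
  have hβ1 : (0:ℝ) ≤ β - 1 := by linarith
  have hα1 : (0:ℝ) ≤ α - 1 := by linarith
  -- region set identities
  have hAB : ∀ f : E → ℝ, ∑ e ∈ T', f e
      = ∑ e ∈ T' ∩ SOL, f e + ∑ e ∈ T' \ SOL, f e := by
    intro f; exact (Finset.sum_inter_add_sum_sdiff T' SOL f).symm
  have hAC : ∀ f : E → ℝ, ∑ e ∈ SOL, f e
      = ∑ e ∈ T' ∩ SOL, f e + ∑ e ∈ SOL \ T', f e := by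
    intro f
    have := (Finset.sum_inter_add_sum_sdiff SOL T' f).symm
    rwa [Finset.inter_comm] at this
  have hsetC : T'ᶜ ∩ SOL = SOL \ T' := by
    ext e
    simp only [Finset.mem_inter, Finset.mem_compl, Finset.mem_sdiff, Finset.mem_union]
    tauto
  have hsetD : T'ᶜ \ SOL = (T' ∪ SOL)ᶜ := by
    ext e
    simp only [Finset.mem_inter, Finset.mem_compl, Finset.mem_sdiff, Finset.mem_union]
    tauto
  have hsetB : SOLᶜ ∩ T' = T' \ SOL := by
    ext e
    simp only [Finset.mem_inter, Finset.mem_compl, Finset.mem_sdiff, Finset.mem_union]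
    tauto
  have hsetD' : SOLᶜ \ T' = (T' ∪ SOL)ᶜ := by
    ext e
    simp only [Finset.mem_inter, Finset.mem_compl, Finset.mem_sdiff, Finset.mem_union]
    tauto
  have hCD : ∀ f : E → ℝ, ∑ e ∈ T'ᶜ, f e
      = ∑ e ∈ SOL \ T', f e + ∑ e ∈ (T' ∪ SOL)ᶜ, f e := by
    intro f
    have := (Finset.sum_inter_add_sum_sdiff T'ᶜ SOL f).symm
    rwa [hsetC, hsetD] at this
  have hBD : ∀ f : E → ℝ, ∑ e ∈ SOLᶜ, f e
      = ∑ e ∈ T' \ SOL, f e + ∑ e ∈ (T' ∪ SOL)ᶜ, f e := by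
    intro f
    have := (Finset.sum_inter_add_sum_sdiff SOLᶜ T' f).symm
    rwa [hsetB, hsetD'] at this
  -- region sums
  set uB := ∑ e ∈ T' \ SOL, u e * x e with huB
  set uC := ∑ e ∈ SOL \ T', u e * x e with huC
  set uD := ∑ e ∈ (T' ∪ SOL)ᶜ, u e * x e with huD
  set lxA := ∑ e ∈ T' ∩ SOL, ℓ e * x e with hlxA
  set lxB := ∑ e ∈ T' \ SOL, ℓ e * x e with hlxB
  set lxC := ∑ e ∈ SOL \ T', ℓ e * x e with hlxC
  set lA := ∑ e ∈ T' ∩ SOL, ℓ e with hlA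
  set lB := ∑ e ∈ T' \ SOL, ℓ e with hlB
  set lC := ∑ e ∈ SOL \ T', ℓ e with hlC
  -- nonnegativity facts
  have hux0 : ∀ e, 0 ≤ u e * x e := fun e =>
    mul_nonneg (le_trans (hℓ e) (hℓu e)) (hx e).1
  have hlx0 : ∀ e, 0 ≤ ℓ e * x e := fun e => mul_nonneg (hℓ e) (hx e).1
  have hlxl : ∀ e, ℓ e * x e ≤ ℓ e := fun e => by
    nlinarith [(hx e).2, hℓ e, (hx e).1]
  have huD0 : 0 ≤ uD := Finset.sum_nonneg fun e _ => hux0 e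
  have hlxA0 : 0 ≤ lxA := Finset.sum_nonneg fun e _ => hlx0 e
  have hlxC0 : 0 ≤ lxC := Finset.sum_nonneg fun e _ => hlx0 e
  have hlA0 : lxA ≤ lA := Finset.sum_le_sum fun e _ => hlxl e
  have hlB0 : lxB ≤ lB := Finset.sum_le_sum fun e _ => hlxl e
  have hlC0 : lxC ≤ lC := Finset.sum_le_sum fun e _ => hlxl e
  -- rewrite h2 and h3 in region sums
  have hcB : ∑ e ∈ T' \ SOL, c e = uB - lxB + lB := by
    simp only [hc, huB, hlxB, hlB, Finset.sum_add_distrib, Finset.sum_sub_distrib]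
  have hcC : ∑ e ∈ SOL \ T', c e = uC - lxC + lC := by
    simp only [hc, huC, hlxC, hlC, Finset.sum_add_distrib, Finset.sum_sub_distrib]
  have hc'B : ∑ e ∈ T' \ SOL, c' e = lB - lxB := by
    simp only [hc', hlB, hlxB, Finset.sum_sub_distrib]
  have hc'SOL : ∑ e ∈ SOL, c' e = (lA + lC) - (lxA + lxC) := by
    rw [hAC (fun e => c' e)]
    simp only [hc', Finset.sum_sub_distrib]
    ring
  rw [hcB, hcC] at h2
  rw [hc'B, hc'SOL] at h3
  have h3' : (lB - lxB) * β ≤ (α - 1 - β) * ((lA + lC) - (lxA + lxC)) := by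
    rw [div_mul_eq_mul_div, le_div_iff₀ hβ0] at h3
    exact h3
  -- Step 1: bound β * r using the realization d
  have I1 : β * r < (uB + uD) + (lxA + lxC) - α * (lA + lC) := by
    have hsplit : ∑ e, d e * x e
        = ∑ e ∈ SOL, d e * x e + ∑ e ∈ SOLᶜ, d e * x e :=
      (Finset.sum_add_sum_compl SOL _).symm
    have hoff : ∑ e ∈ SOLᶜ, d e * x e ≤ uB + uD := by
      rw [← hBD (fun e => u e * x e)]
      exact Finset.sum_le_sum fun e _ =>
        mul_le_mul_of_nonneg_right (hd e).2 (hx e).1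
    have hon : ∑ e ∈ SOL, d e * x e - α * ∑ e ∈ SOL, d e
        ≤ (lxA + lxC) - α * (lA + lC) := by
      have key : ∀ e ∈ SOL, d e * x e - α * d e ≤ ℓ e * x e - α * ℓ e := by
        intro e _
        have hxα : x e - α ≤ 0 := by linarith [(hx e).2]
        nlinarith [(hd e).1, hxα]
      have := Finset.sum_le_sum key
      rw [Finset.sum_sub_distrib, ← Finset.mul_sum, Finset.sum_sub_distrib,
        ← Finset.mul_sum] at this
      rw [hAC (fun e => ℓ e * x e), hAC (fun e => ℓ e)] at this
      linarith
    rw [hsplit] at hd1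
    linarith
  clear_value uB uC uD lxA lxB lxC lA lB lC
  -- Step 2: the combinatorial certificate
  have hlA0' : 0 ≤ lA := le_trans hlxA0 hlA0
  have hlC0' : 0 ≤ lC := le_trans hlxC0 hlC0
  have I2 : (uB + uD) + (lxA + lxC) - α * (lA + lC)
      ≤ β * ((uC + uD) + (lxA + lxB) - (lA + lB)) := by
    have e1 : 0 ≤ β * (β * (uC - lxC + lC) - (uB - lxB + lB)) :=
      mul_nonneg hβ0.le (sub_nonneg.2 h2)
    have e2 : 0 ≤ (β - 1) * ((α - 1 - β) * ((lA + lC) - (lxA + lxC)) - (lB - lxB) * β) :=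
      mul_nonneg hβ1 (sub_nonneg.2 h3')
    have e3 : 0 ≤ β * (β - 1) * uD := mul_nonneg (mul_nonneg hβ0.le hβ1) huD0
    have e4 : 0 ≤ (β - 1) * (α - 1) * lxA := mul_nonneg (mul_nonneg hβ1 hα1) hlxA0
    have e5 : 0 ≤ (β - 1) * (α - 1) * lxC := mul_nonneg (mul_nonneg hβ1 hα1) hlxC0
    have e6 : 0 ≤ (α - 1) * lA := mul_nonneg hα1 hlA0'
    have e7 : 0 ≤ (α - 1) * lC := mul_nonneg hα1 hlC0'
    have key : β * ((uB + uD) + (lxA + lxC) - α * (lA + lC))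
        ≤ β * (β * ((uC + uD) + (lxA + lxB) - (lA + lB))) := by linarith [e1, e2, e3, e4, e5, e6, e7]
    exact le_of_mul_le_mul_left key hβ0
  -- Conclusion
  have hgoal : (∑ e ∈ T'ᶜ, u e * x e) + (∑ e ∈ T', ℓ e * x e) - (∑ e ∈ T', ℓ e)
      = (uC + uD) + (lxA + lxB) - (lA + lB) := by
    rw [hCD (fun e => u e * x e), hAB (fun e => ℓ e * x e), hAB (fun e => ℓ e),
      ← huC, ← huD, ← hlxA, ← hlxB, ← hlA, ← hlB]
  rw [hgoal]
  have : β * r < β * ((uC + uD) + (lxA + lxB) - (lA + lB)) := lt_of_lt_of_le I1 I2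
  exact lt_of_mul_lt_mul_left this hβ0.le
end
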